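/- Let A be a Boolean algebra that contains a chain of order type ω₂, i.e., there is a strictly increasing map from the ordinals below ω₂ into A. Then the ordinal ω₂ + 1 (the ordinals ≤ ω₂ with their usual order) is an order retract of A: there exist order preserving maps e : ω₂ + 1 → A and f : A → ω₂ + 1 with f ∘ e = id. -/

import Mathlib

open Set Cardinal

universe u v

theorem omega2_succ_retract_of_chain_aux1
    {A : Type*} [BooleanAlgebra A]
    (c : {γ : Ordinal.{v} // γ < (Cardinal.aleph 2).ord} → A) (hc : StrictMono c) :
    ∃ (e : {γ : Ordinal.{v} // γ ≤ (Cardinal.aleph 2).ord} → A)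
      (f : A → {γ : Ordinal.{v} // γ ≤ (Cardinal.aleph 2).ord}),
      Monotone e ∧ Monotone f ∧ ∀ x, f (e x) = x := by
  have hΘlim : Order.IsSuccLimit ((Cardinal.aleph 2).ord : Ordinal.{v}) :=
    Cardinal.isSuccLimit_ord (by simpa using Cardinal.aleph0_le_aleph 2)
  set S : A → Set Ordinal.{v} :=
    fun a => {δ | ∃ h : δ < (Cardinal.aleph 2).ord, c ⟨δ, h⟩ ≤ a} with hSdef
  have hbdd : ∀ a, BddAbove (S a) :=
    fun a => ⟨(Cardinal.aleph 2).ord, fun δ hδ => hδ.1.le⟩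
  have hsup_le : ∀ a, sSup (S a) ≤ (Cardinal.aleph 2).ord := by
    intro a
    rcases (S a).eq_empty_or_nonempty with h | h
    · simp [h]
    · exact csSup_le h fun δ hδ => hδ.1.le
  refine ⟨fun γ => if h : γ.1 < (Cardinal.aleph 2).ord then c ⟨γ.1, h⟩ else ⊤,
    fun a => ⟨sSup (S a), hsup_le a⟩, ?_, ?_, ?_⟩
  · -- Monotone e
    intro x y hxy
    dsimp only
    split_ifs with h1 h2 h2
    · exact hc.monotone (Subtype.mk_le_mk.mpr hxy)
    · exact le_top
    · exact absurd (lt_of_le_of_lt (Subtype.coe_le_coe.mpr hxy) h2) h1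
    · exact le_rfl
  · -- Monotone f
    intro a b hab
    rw [Subtype.mk_le_mk]
    rcases (S a).eq_empty_or_nonempty with h | h
    · simp [h]
    · exact csSup_le_csSup (hbdd b) h fun δ hδ => ⟨hδ.1, hδ.2.trans hab⟩
  · -- f ∘ e = id
    rintro ⟨γ, hγ⟩
    apply Subtype.ext
    show sSup (S (if h : γ < (Cardinal.aleph 2).ord then c ⟨γ, h⟩ else ⊤)) = γ
    by_cases h : γ < (Cardinal.aleph 2).ord
    · rw [dif_pos h]
      have hset : S (c ⟨γ, h⟩) = Iic γ := by
        ext δ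
        constructor
        · rintro ⟨hd, hle⟩
          exact Subtype.mk_le_mk.mp (hc.le_iff_le.mp hle)
        · intro hle
          exact ⟨lt_of_le_of_lt hle h, hc.monotone (Subtype.mk_le_mk.mpr hle)⟩
      rw [hset, csSup_Iic]
    · have hγΘ : γ = (Cardinal.aleph 2).ord := le_antisymm hγ (not_lt.mp h)
      rw [dif_neg h]
      have hset : S ⊤ = Iio (Cardinal.aleph 2).ord := by
        ext δ
        exact ⟨fun hδ => hδ.1, fun hδ => ⟨hδ, le_top⟩⟩
      rw [hset, hγΘ]
      apply le_antisymm
      · exact csSup_le ⟨0, hΘlim.pos⟩ fun δ hδ => hδ.le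
      · refine le_of_forall_lt fun b hb => ?_
        exact lt_of_lt_of_le (Order.lt_succ b)
          (le_csSup ⟨(Cardinal.aleph 2).ord, fun δ hδ => hδ.le⟩ (hΘlim.succ_lt hb))

theorem omega2_succ_retract_of_chain_aux2
    {A : Type*} [BooleanAlgebra A]
    (c : {γ : Ordinal.{u} // γ < (Cardinal.aleph 2).ord} → A) (hc : StrictMono c) :
    ∃ (e : {γ : Ordinal.{v} // γ ≤ (Cardinal.aleph 2).ord} → A)
      (f : A → {γ : Ordinal.{v} // γ ≤ (Cardinal.aleph 2).ord}),
      Monotone e ∧ Monotone f ∧ ∀ x, f (e x) = x := by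
  have hlift : Ordinal.lift.{v, u} (Cardinal.aleph 2).ord
      = Ordinal.lift.{u, v} (Cardinal.aleph 2).ord := by
    rw [Cardinal.lift_ord, Cardinal.lift_ord, Cardinal.lift_aleph, Cardinal.lift_aleph]
    norm_num
  have key : ∀ δ : Ordinal.{v}, δ < (Cardinal.aleph 2).ord →
      ∃ γ : Ordinal.{u}, Ordinal.lift.{v, u} γ = Ordinal.lift.{u, v} δ := by
    intro δ hδ
    exact Ordinal.mem_range_lift_of_le (le_of_lt (hlift ▸ Ordinal.lift_lt.mpr hδ))
  have keylt : ∀ (δ : Ordinal.{v}) (hδ : δ < (Cardinal.aleph 2).ord),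
      (key δ hδ).choose < (Cardinal.aleph 2).ord := by
    intro δ hδ
    have := (key δ hδ).choose_spec
    apply Ordinal.lift_lt.{v, u}.mp
    calc Ordinal.lift.{v, u} (key δ hδ).choose
        = Ordinal.lift.{u, v} δ := this
      _ < Ordinal.lift.{u, v} (Cardinal.aleph 2).ord := Ordinal.lift_lt.mpr hδ
      _ = _ := hlift.symm
  set c' : {γ : Ordinal.{v} // γ < (Cardinal.aleph 2).ord} → A :=
    fun d => c ⟨(key d.1 d.2).choose, keylt d.1 d.2⟩ with hc'def
  have hc' : StrictMono c' := by
    intro d₁ d₂ hd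
    apply hc
    rw [Subtype.mk_lt_mk]
    apply Ordinal.lift_lt.{v, u}.mp
    rw [(key d₁.1 d₁.2).choose_spec, (key d₂.1 d₂.2).choose_spec]
    exact Ordinal.lift_lt.mpr hd
  exact omega2_succ_retract_of_chain_aux1 c' hc'

/-- If a Boolean algebra `A` contains a chain of order type `ω₂`, then the linear
order `ω₂ + 1` (the ordinals `≤ ω₂`) is an order retract of `A`. -/
theorem omega2_succ_retract_of_chain
    {A : Type*} [BooleanAlgebra A]
    (c : {γ : Ordinal // γ < (Cardinal.aleph 2).ord} → A) (hc : StrictMono c) :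
    ∃ (e : {γ : Ordinal // γ ≤ (Cardinal.aleph 2).ord} → A)
      (f : A → {γ : Ordinal // γ ≤ (Cardinal.aleph 2).ord}),
      Monotone e ∧ Monotone f ∧ ∀ x, f (e x) = x :=
  omega2_succ_retract_of_chain_aux2 c hc
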